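/- Let G = (V,E) be a finite simple graph with no isolated vertices. The independent set game Γ_G is population monotonic if and only if (i) every vertex of G has distance at most two to a pendant vertex, and (ii) no two non-pendant edges of type I are incident in G. -/

import Mathlib

open Finset

variable {V : Type*} [Fintype V] [DecidableEq V]

/-- `I` is an independent set of the graph `G`. -/
def Indep (G : SimpleGraph V) (I : Finset V) : Prop :=
  ∀ u ∈ I, ∀ v ∈ I, ¬ G.Adj u v

/-- The independence number of `G` restricted to the vertex set `U`,
i.e. `α(G[U])`: the maximum size of an independent set contained in `U`. -/
noncomputable def alphaOn (G : SimpleGraph V) (U : Set V) : ℕ :=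
  sSup {n : ℕ | ∃ I : Finset V, ↑I ⊆ U ∧ Indep G I ∧ I.card = n}

/-- `δ(v)`: the set of edges of `G` incident to the vertex `v`. -/
def incEdges (G : SimpleGraph V) (v : V) : Set (Sym2 V) :=
  {e | e ∈ G.edgeSet ∧ v ∈ e}

/-- `δ(v)` as a finset. -/
def incFinset (G : SimpleGraph V) [DecidableRel G.Adj] (v : V) : Finset (Sym2 V) :=
  G.edgeFinset.filter (fun e => v ∈ e)

/-- `V⟨S⟩`: the set of vertices of `G` all of whose incident edges lie in `S`. -/
def onlyInc (G : SimpleGraph V) (S : Set (Sym2 V)) : Set V :=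
  {v | incEdges G v ⊆ S}

/-- The characteristic function of the independent set game on `G`:
`γ(S) = α(G[V⟨S⟩])`. -/
noncomputable def gammaIS (G : SimpleGraph V) (S : Finset (Sym2 V)) : ℕ :=
  alphaOn G (onlyInc G ↑S)

/-- `x` is a population monotonic allocation scheme (PMAS) of the independent set
game on `G`: it is nonnegative, efficient, and monotone.  Coalitions are the
nonempty subsets of the player set `N = E(G)` (`G.edgeFinset`). -/
def IsPMAS (G : SimpleGraph V) [DecidableRel G.Adj]
    (x : Finset (Sym2 V) → Sym2 V → ℝ) : Prop :=
  (∀ S ⊆ G.edgeFinset, ∀ i ∈ S, 0 ≤ x S i) ∧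
  (∀ S ⊆ G.edgeFinset, S.Nonempty → ∑ i ∈ S, x S i = (gammaIS G S : ℝ)) ∧
  (∀ S T : Finset (Sym2 V), S ⊆ T → T ⊆ G.edgeFinset → S.Nonempty →
    ∀ i ∈ S, x S i ≤ x T i)

/-- An edge of `G` is pendant if one of its endpoints has degree one. -/
def PendantEdge (G : SimpleGraph V) [DecidableRel G.Adj] (e : Sym2 V) : Prop :=
  e ∈ G.edgeSet ∧ ∃ v ∈ e, G.degree v = 1

/-- A non-pendant edge of type I: not incident to any pendant edge. -/
def TypeI (G : SimpleGraph V) [DecidableRel G.Adj] (e : Sym2 V) : Prop :=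
  e ∈ G.edgeSet ∧ ¬ PendantEdge G e ∧
    ∀ f : Sym2 V, PendantEdge G f → ¬ ∃ w : V, w ∈ e ∧ w ∈ f

/-- A non-pendant edge of type II: incident to some pendant edge. -/
def TypeII (G : SimpleGraph V) [DecidableRel G.Adj] (e : Sym2 V) : Prop :=
  e ∈ G.edgeSet ∧ ¬ PendantEdge G e ∧
    ∃ f : Sym2 V, PendantEdge G f ∧ ∃ w : V, w ∈ e ∧ w ∈ f

/-- The vertex `v` has distance at most two to some pendant vertex of `G`. -/
def NearPendant (G : SimpleGraph V) [DecidableRel G.Adj] (v : V) : Prop :=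
  ∃ p : V, G.degree p = 1 ∧ ∃ w : G.Walk v p, w.length ≤ 2

section Basics

variable (G : SimpleGraph V) [DecidableRel G.Adj]

/-- support vertex: adjacent to a pendant vertex -/
def IsSupp (v : V) : Prop := ∃ p, G.Adj v p ∧ G.degree p = 1

variable {G}

lemma mem_incEdges {v : V} {e : Sym2 V} : e ∈ incEdges G v ↔ e ∈ G.edgeSet ∧ v ∈ e :=
  Iff.rfl

lemma adj_mem_incEdges {u v : V} (h : G.Adj u v) : s(u, v) ∈ incEdges G u :=
  ⟨h, Sym2.mem_mk_left u v⟩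

lemma mem_incFinset {G : SimpleGraph V} [DecidableRel G.Adj] {v : V} {e : Sym2 V} :
    e ∈ incFinset G v ↔ e ∈ G.edgeSet ∧ v ∈ e := by
  simp [incFinset]

lemma adj_incFinset_left {G : SimpleGraph V} [DecidableRel G.Adj] {u v : V} (h : G.Adj u v) :
    s(u, v) ∈ incFinset G u :=
  mem_incFinset.mpr ⟨G.mem_edgeSet.mpr h, Sym2.mem_mk_left u v⟩

lemma adj_incFinset_right {G : SimpleGraph V} [DecidableRel G.Adj] {u v : V} (h : G.Adj u v) :
    s(u, v) ∈ incFinset G v :=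
  mem_incFinset.mpr ⟨G.mem_edgeSet.mpr h, Sym2.mem_mk_right u v⟩

lemma exists_adj (hiso : ∀ v : V, G.degree v ≠ 0) (v : V) : ∃ u, G.Adj v u :=
  (G.degree_pos_iff_exists_adj v).mp (Nat.pos_of_ne_zero (hiso v))

lemma edge_decomp {v : V} {e : Sym2 V} (he : e ∈ G.edgeSet) (hv : v ∈ e) :
    ∃ u, G.Adj v u ∧ e = s(v, u) := by
  obtain ⟨u, rfl⟩ := Sym2.mem_iff_exists.mp hv
  exact ⟨u, G.mem_edgeSet.mp he, rfl⟩

lemma nbr_eq_of_degree_one {p u u' : V} (hp : G.degree p = 1)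
    (h : G.Adj p u) (h' : G.Adj p u') : u = u' := by
  have hc : (G.neighborFinset p).card ≤ 1 := le_of_eq hp
  exact Finset.card_le_one.mp hc u (by simpa using h) u' (by simpa using h')

lemma pendant_edge_unique {p : V} (hp : G.degree p = 1) {e e' : Sym2 V}
    (he : e ∈ incEdges G p) (he' : e' ∈ incEdges G p) : e = e' := by
  obtain ⟨u, hu, rfl⟩ := edge_decomp he.1 he.2
  obtain ⟨u', hu', rfl⟩ := edge_decomp he'.1 he'.2
  rw [nbr_eq_of_degree_one hp hu hu']

lemma typeI_iff {u v : V} (h : G.Adj u v) :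
    TypeI G s(u, v) ↔
      G.degree u ≠ 1 ∧ G.degree v ≠ 1 ∧ ¬ IsSupp G u ∧ ¬ IsSupp G v := by
  constructor
  · rintro ⟨he, hnp, hni⟩
    refine ⟨fun h1 => hnp ⟨he, u, Sym2.mem_mk_left u v, h1⟩,
      fun h1 => hnp ⟨he, v, Sym2.mem_mk_right u v, h1⟩, ?_, ?_⟩
    · rintro ⟨p, hup, hp1⟩
      exact hni s(u, p) ⟨G.mem_edgeSet.mpr hup, p, Sym2.mem_mk_right u p, hp1⟩
        ⟨u, Sym2.mem_mk_left u v, Sym2.mem_mk_left u p⟩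
    · rintro ⟨p, hvp, hp1⟩
      exact hni s(v, p) ⟨G.mem_edgeSet.mpr hvp, p, Sym2.mem_mk_right v p, hp1⟩
        ⟨v, Sym2.mem_mk_right u v, Sym2.mem_mk_left v p⟩
  · rintro ⟨hu1, hv1, hsu, hsv⟩
    refine ⟨G.mem_edgeSet.mpr h, ?_, ?_⟩
    · rintro ⟨-, z, hz, hz1⟩
      rcases Sym2.mem_iff.mp hz with rfl | rfl
      exacts [hu1 hz1, hv1 hz1]
    · rintro f ⟨hf, q, hqf, hq1⟩ ⟨w, hwe, hwf⟩
      have hw1 : G.degree w ≠ 1 := by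
        rcases Sym2.mem_iff.mp hwe with rfl | rfl
        exacts [hu1, hv1]
      have hwq : w ≠ q := fun hwq => hw1 (hwq ▸ hq1)
      have hfq : f = s(w, q) := (Sym2.mem_and_mem_iff hwq).mp ⟨hwf, hqf⟩
      have hadj : G.Adj w q := G.mem_edgeSet.mp (hfq ▸ hf)
      rcases Sym2.mem_iff.mp hwe with rfl | rfl
      exacts [hsu ⟨q, hadj, hq1⟩, hsv ⟨q, hadj, hq1⟩]

lemma typeI_endpoint {v : V} {e : Sym2 V} (ht : TypeI G e) (hv : v ∈ e) :
    G.degree v ≠ 1 ∧ ¬ IsSupp G v := by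
  obtain ⟨u, hu, rfl⟩ := edge_decomp ht.1 hv
  have := (typeI_iff hu).mp ht
  exact ⟨this.1, this.2.2.1⟩

end Basics

section Alpha

set_option linter.unusedSectionVars false

variable {G : SimpleGraph V} [DecidableRel G.Adj]

lemma le_alphaOn {U : Set V} {I : Finset V} (h1 : ↑I ⊆ U) (h2 : Indep G I) :
    I.card ≤ alphaOn G U := by
  apply le_csSup
  · exact ⟨Fintype.card V, fun n ⟨J, _, _, hJ⟩ => hJ ▸ J.card_le_univ⟩
  · exact ⟨I, h1, h2, rfl⟩

lemma alphaOn_le {U : Set V} {m : ℕ}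
    (h : ∀ I : Finset V, ↑I ⊆ U → Indep G I → I.card ≤ m) : alphaOn G U ≤ m := by
  apply csSup_le
  · exact ⟨0, ∅, by simp [Indep]⟩
  · rintro n ⟨I, hI, hind, rfl⟩
    exact h I hI hind

lemma alphaOn_eq_one {U : Set V} (hne : U.Nonempty)
    (hcl : ∀ x ∈ U, ∀ y ∈ U, x ≠ y → G.Adj x y) : alphaOn G U = 1 := by
  apply le_antisymm
  · refine alphaOn_le fun I hI hind => Finset.card_le_one.mpr fun a ha b hb => ?_
    by_contra hab
    exact hind a ha b hb (hcl a (hI ha) b (hI hb) hab)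
  · obtain ⟨a, ha⟩ := hne
    have : ({a} : Finset V).card ≤ alphaOn G U := by
      apply le_alphaOn (by simpa using ha)
      intro u hu v hv
      simp only [Finset.mem_singleton] at hu hv
      subst hu; subst hv; exact fun h => G.irrefl h
    simpa using this

end Alpha

section NearP

set_option linter.unusedSectionVars false

variable {G : SimpleGraph V} [DecidableRel G.Adj]

lemma typeI_unique (hii : ∀ e f : Sym2 V, TypeI G e → TypeI G f → e ≠ f →
      ¬ ∃ w : V, w ∈ e ∧ w ∈ f)
    {e f : Sym2 V} {w : V} (he : TypeI G e) (hf : TypeI G f)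
    (hwe : w ∈ e) (hwf : w ∈ f) : e = f := by
  by_contra hne
  exact hii e f he hf hne ⟨w, hwe, hwf⟩

lemma near_of_hii (hiso : ∀ v : V, G.degree v ≠ 0)
    (hii : ∀ e f : Sym2 V, TypeI G e → TypeI G f → e ≠ f →
      ¬ ∃ w : V, w ∈ e ∧ w ∈ f) (v : V) : NearPendant G v := by
  by_cases h0 : G.degree v = 1
  · exact ⟨v, h0, SimpleGraph.Walk.nil, by simp⟩
  by_cases h1 : ∃ p, G.Adj v p ∧ G.degree p = 1
  · obtain ⟨p, hvp, hp⟩ := h1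
    exact ⟨p, hp, SimpleGraph.Walk.cons hvp SimpleGraph.Walk.nil, by simp⟩
  by_cases h2 : ∃ w p, G.Adj v w ∧ G.Adj w p ∧ G.degree p = 1
  · obtain ⟨w, p, hvw, hwp, hp⟩ := h2
    exact ⟨p, hp, SimpleGraph.Walk.cons hvw (SimpleGraph.Walk.cons hwp SimpleGraph.Walk.nil),
      by simp⟩
  exfalso
  push_neg at h1 h2
  -- v has at least two distinct neighbors
  have hdeg : 1 < G.degree v := by
    have := hiso v
    omega
  obtain ⟨a, ha, b, hb, hab⟩ := Finset.one_lt_card.mp hdeg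
  rw [SimpleGraph.mem_neighborFinset] at ha hb
  have hta : TypeI G s(v, a) := by
    rw [typeI_iff ha]
    exact ⟨h0, fun h => h1 a ha h, fun ⟨p, hp, hp1⟩ => h1 p hp hp1,
      fun ⟨p, hp, hp1⟩ => h2 a p ha hp hp1⟩
  have htb : TypeI G s(v, b) := by
    rw [typeI_iff hb]
    exact ⟨h0, fun h => h1 b hb h, fun ⟨p, hp, hp1⟩ => h1 p hp hp1,
      fun ⟨p, hp, hp1⟩ => h2 b p hb hp hp1⟩
  have : s(v, a) = s(v, b) :=
    typeI_unique hii hta htb (Sym2.mem_mk_left v a) (Sym2.mem_mk_left v b)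
  exact hab (Sym2.congr_right.mp this)

end NearP

section Necessity

set_option linter.unusedSectionVars false

variable (G : SimpleGraph V) [DecidableRel G.Adj]

def Zset (a b : V) : Set V :=
  {z | z ≠ a ∧ z ≠ b ∧ ∀ t, G.Adj z t → t = a ∨ t = b}

variable {G}

lemma zset_adj (hiso : ∀ v : V, G.degree v ≠ 0) {a b z : V}
    (ha : ¬ IsSupp G a) (hb : ¬ IsSupp G b) (hz : z ∈ Zset G a b) :
    G.Adj z a ∧ G.Adj z b := by
  obtain ⟨y, hy⟩ := exists_adj hiso z
  constructor
  · by_contra hza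
    have hall : ∀ t, G.Adj z t → t = b := fun t ht =>
      (hz.2.2 t ht).resolve_left (fun h => hza (h ▸ ht))
    have hzb : G.Adj z b := hall y hy ▸ hy
    have hdz : G.degree z = 1 := by
      have hnb : G.neighborFinset z = {b} := by
        ext t
        simp only [SimpleGraph.mem_neighborFinset, Finset.mem_singleton]
        exact ⟨hall t, fun h => h ▸ hzb⟩
      rw [SimpleGraph.degree, hnb, Finset.card_singleton]
    exact hb ⟨z, hzb.symm, hdz⟩
  · by_contra hzb
    have hall : ∀ t, G.Adj z t → t = a := fun t ht =>
      (hz.2.2 t ht).resolve_right (fun h => hzb (h ▸ ht))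
    have hza : G.Adj z a := hall y hy ▸ hy
    have hdz : G.degree z = 1 := by
      have hnb : G.neighborFinset z = {a} := by
        ext t
        simp only [SimpleGraph.mem_neighborFinset, Finset.mem_singleton]
        exact ⟨hall t, fun h => h ▸ hza⟩
      rw [SimpleGraph.degree, hnb, Finset.card_singleton]
    exact ha ⟨z, hza.symm, hdz⟩

lemma coe_incFinset (a : V) : (↑(incFinset G a) : Set (Sym2 V)) = incEdges G a := by
  ext e
  simp [incFinset, incEdges, SimpleGraph.mem_edgeFinset]

lemma onlyInc_star (hiso : ∀ v : V, G.degree v ≠ 0) {t : V} (ht : ¬ IsSupp G t) :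
    onlyInc G (incEdges G t) = {t} := by
  ext z
  simp only [onlyInc, Set.mem_setOf_eq, Set.mem_singleton_iff]
  constructor
  · intro hsub
    by_contra hzt
    have hall : ∀ y, G.Adj z y → y = t := by
      intro y hy
      have := hsub (adj_mem_incEdges hy)
      rcases Sym2.mem_iff.mp this.2 with h | h
      · exact absurd h.symm hzt
      · exact h.symm
    obtain ⟨y, hy⟩ := exists_adj hiso z
    have hzt' : G.Adj z t := hall y hy ▸ hy
    have hdz : G.degree z = 1 := by
      have hnb : G.neighborFinset z = {t} := by
        ext u
        simp only [SimpleGraph.mem_neighborFinset, Finset.mem_singleton]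
        exact ⟨hall u, fun h => h ▸ hzt'⟩
      rw [SimpleGraph.degree, hnb, Finset.card_singleton]
    exact ht ⟨z, hzt'.symm, hdz⟩
  · rintro rfl
    exact fun e he => he

lemma onlyInc_pair (hiso : ∀ v : V, G.degree v ≠ 0) {a b : V} (hab : G.Adj a b) :
    onlyInc G (incEdges G a ∪ incEdges G b) = insert a (insert b (Zset G a b)) := by
  ext z
  simp only [onlyInc, Set.mem_setOf_eq, Set.mem_insert_iff]
  constructor
  · intro hsub
    by_cases hza : z = a
    · exact Or.inl hza
    by_cases hzb : z = b
    · exact Or.inr (Or.inl hzb)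
    refine Or.inr (Or.inr ⟨hza, hzb, fun t ht => ?_⟩)
    rcases hsub (adj_mem_incEdges ht) with h | h
    · rcases Sym2.mem_iff.mp h.2 with h' | h'
      · exact absurd h'.symm hza
      · exact Or.inl h'.symm
    · rcases Sym2.mem_iff.mp h.2 with h' | h'
      · exact absurd h'.symm hzb
      · exact Or.inr h'.symm
  · rintro (rfl | rfl | hz)
    · exact fun e he => Or.inl he
    · exact fun e he => Or.inr he
    · intro e he
      obtain ⟨y, hy, rfl⟩ := edge_decomp he.1 he.2
      rcases hz.2.2 y hy with rfl | rfl
      · exact Or.inl ⟨he.1, Sym2.mem_mk_right z y⟩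
      · exact Or.inr ⟨he.1, Sym2.mem_mk_right z y⟩

lemma gamma_star (hiso : ∀ v : V, G.degree v ≠ 0) {t : V} (ht : ¬ IsSupp G t) :
    gammaIS G (incFinset G t) = 1 := by
  rw [gammaIS, coe_incFinset, onlyInc_star hiso ht]
  apply alphaOn_eq_one (U := {t}) ⟨t, rfl⟩
  rintro x rfl y rfl h
  exact absurd rfl h

lemma gamma_pair (hiso : ∀ v : V, G.degree v ≠ 0) {a b : V} (hab : G.Adj a b)
    (ha : ¬ IsSupp G a) (hb : ¬ IsSupp G b) (hZ : (Zset G a b).Subsingleton) :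
    gammaIS G (incFinset G a ∪ incFinset G b) = 1 := by
  rw [gammaIS, Finset.coe_union, coe_incFinset, coe_incFinset, onlyInc_pair hiso hab]
  apply alphaOn_eq_one ⟨a, Or.inl rfl⟩
  rintro x (rfl | rfl | hx) y (rfl | rfl | hy) hxy
  · exact absurd rfl hxy
  · exact hab
  · exact ((zset_adj hiso ha hb hy).1).symm
  · exact hab.symm
  · exact absurd rfl hxy
  · exact ((zset_adj hiso ha hb hy).2).symm
  · exact (zset_adj hiso ha hb hx).1
  · exact (zset_adj hiso ha hb hx).2
  · exact absurd (hZ hx hy) hxy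

lemma necCore (hiso : ∀ v : V, G.degree v ≠ 0) {a b c : V}
    (hab : G.Adj a b) (hbc : G.Adj b c) (hac : a ≠ c)
    (hsa : ¬ IsSupp G a) (hsb : ¬ IsSupp G b) (hsc : ¬ IsSupp G c)
    (hZab : (Zset G a b).Subsingleton) (hZbc : (Zset G b c).Subsingleton) :
    ¬ ∃ x : Finset (Sym2 V) → Sym2 V → ℝ, IsPMAS G x := by
  rintro ⟨x, hpos, heff, hmono⟩
  set A := incFinset G a with hA
  set B := incFinset G b with hB
  set C := incFinset G c with hC
  have hsubA : A ⊆ G.edgeFinset := Finset.filter_subset _ _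
  have hsubB : B ⊆ G.edgeFinset := Finset.filter_subset _ _
  have hsubC : C ⊆ G.edgeFinset := Finset.filter_subset _ _
  have hmemA : s(a, b) ∈ A := adj_incFinset_left hab
  have hmemBab : s(a, b) ∈ B := adj_incFinset_right hab
  have hmemBbc : s(b, c) ∈ B := adj_incFinset_left hbc
  have hmemC : s(b, c) ∈ C := adj_incFinset_right hbc
  -- generic killing lemma
  have kill : ∀ (u v : V) (hu : ¬ IsSupp G u) (hv : ¬ IsSupp G v) (huv : G.Adj u v)
      (hZ : (Zset G u v).Subsingleton) (g : Sym2 V),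
      g ∈ incFinset G v → g ≠ s(u, v) → x (incFinset G v) g = 0 := by
    intro u v hu hv huv hZ g hg hne
    set A' := incFinset G u
    set B' := incFinset G v
    have hsubA' : A' ⊆ G.edgeFinset := Finset.filter_subset _ _
    have hsubB' : B' ⊆ G.edgeFinset := Finset.filter_subset _ _
    have hsubU : A' ∪ B' ⊆ G.edgeFinset := Finset.union_subset hsubA' hsubB'
    have hmemA' : s(u, v) ∈ A' := adj_incFinset_left huv
    have hAne : A'.Nonempty := ⟨_, hmemA'⟩
    have hBne : B'.Nonempty := ⟨g, hg⟩
    have heffA : ∑ i ∈ A', x A' i = 1 := by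
      rw [heff A' hsubA' hAne, gamma_star hiso hu]; norm_num
    have heffU : ∑ i ∈ A' ∪ B', x (A' ∪ B') i = 1 := by
      rw [heff _ hsubU ⟨_, Finset.mem_union_left _ hmemA'⟩, gamma_pair hiso huv hu hv hZ]
      norm_num
    have hmA : ∀ i ∈ A', x A' i ≤ x (A' ∪ B') i :=
      hmono A' (A' ∪ B') Finset.subset_union_left hsubU hAne
    have hgeA : (1 : ℝ) ≤ ∑ i ∈ A', x (A' ∪ B') i := by
      rw [← heffA]; exact Finset.sum_le_sum hmA
    have hsd : ∑ i ∈ (A' ∪ B') \ A', x (A' ∪ B') i = 0 := by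
      have hsplit := Finset.sum_sdiff (f := fun i => x (A' ∪ B') i)
        (Finset.subset_union_left (s₁ := A') (s₂ := B'))
      have hnn : (0 : ℝ) ≤ ∑ i ∈ (A' ∪ B') \ A', x (A' ∪ B') i :=
        Finset.sum_nonneg fun i hi =>
          hpos _ hsubU i (Finset.mem_sdiff.mp hi).1
      nlinarith [hsplit, heffU, hgeA, hnn]
    have hzero : ∀ i ∈ (A' ∪ B') \ A', x (A' ∪ B') i = 0 := by
      intro i hi
      have := (Finset.sum_eq_zero_iff_of_nonneg
        (fun i hi => hpos _ hsubU i (Finset.mem_sdiff.mp hi).1)).mp hsd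
      exact this i hi
    have hgnotA : g ∉ A' := by
      intro hgA
      apply hne
      have hag : u ∈ g := (mem_incFinset.mp hgA).2
      have hbg : v ∈ g := (mem_incFinset.mp hg).2
      exact ((Sym2.mem_and_mem_iff huv.ne).mp ⟨hag, hbg⟩)
    have hgd : g ∈ (A' ∪ B') \ A' :=
      Finset.mem_sdiff.mpr ⟨Finset.mem_union_right _ hg, hgnotA⟩
    have h1 : x B' g ≤ 0 := by
      rw [← hzero g hgd]
      exact hmono B' (A' ∪ B') Finset.subset_union_right hsubU hBne g hg
    exact le_antisymm h1 (hpos B' hsubB' g hg)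
  -- every edge of B gets zero in B
  have hBzero : ∀ g ∈ B, x B g = 0 := by
    intro g hg
    by_cases hgab : g = s(a, b)
    · -- use the pair (c, b)
      apply kill c b hsc hsb hbc.symm ?_ g hg ?_
      · intro z hz z' hz'
        have h1 : z ∈ Zset G b c := ⟨hz.2.1, hz.1, fun t ht => (hz.2.2 t ht).symm⟩
        have h2 : z' ∈ Zset G b c := ⟨hz'.2.1, hz'.1, fun t ht => (hz'.2.2 t ht).symm⟩
        exact hZbc h1 h2
      · subst hgab
        intro h
        have : a ∈ s(c, b) := h ▸ Sym2.mem_mk_left a b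
        rcases Sym2.mem_iff.mp this with rfl | rfl
        · exact hac rfl
        · exact hab.ne rfl
    · exact kill a b hsa hsb hab hZab g hg hgab
  have hBne : B.Nonempty := ⟨_, hmemBab⟩
  have heffB : ∑ i ∈ B, x B i = 1 := by
    rw [heff B hsubB hBne, gamma_star hiso hsb]; norm_num
  rw [Finset.sum_eq_zero hBzero] at heffB
  norm_num at heffB

end Necessity

section NecMain

set_option linter.unusedSectionVars false

variable {G : SimpleGraph V} [DecidableRel G.Adj]

lemma hii_of_pmas (hiso : ∀ v : V, G.degree v ≠ 0)
    (hx : ∃ x : Finset (Sym2 V) → Sym2 V → ℝ, IsPMAS G x) :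
    ∀ e f : Sym2 V, TypeI G e → TypeI G f → e ≠ f → ¬ ∃ w : V, w ∈ e ∧ w ∈ f := by
  rintro e f hte htf hef ⟨w, hwe, hwf⟩
  obtain ⟨a, hwa, rfl⟩ := edge_decomp hte.1 hwe
  obtain ⟨c, hwc, rfl⟩ := edge_decomp htf.1 hwf
  have hac : a ≠ c := fun h => hef (by rw [h])
  have hwprop := typeI_endpoint hte (Sym2.mem_mk_left w a)
  have haprop := typeI_endpoint hte (Sym2.mem_mk_right w a)
  have hcprop := typeI_endpoint htf (Sym2.mem_mk_right w c)
  by_cases hzaw : (Zset G a w).Nonempty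
  · obtain ⟨z, hz⟩ := hzaw
    have hadj := zset_adj hiso haprop.2 hwprop.2 hz
    have hsz : ¬ IsSupp G z := by
      rintro ⟨p, hzp, hp1⟩
      rcases hz.2.2 p hzp with rfl | rfl
      exacts [haprop.1 hp1, hwprop.1 hp1]
    have h1 : (Zset G a z).Subsingleton := by
      intro y hy y' hy'
      have hy1 := zset_adj hiso haprop.2 hsz hy
      have hy2 := zset_adj hiso haprop.2 hsz hy'
      have e1 : y = w := ((hz.2.2 y hy1.2.symm).resolve_left hy.1)
      have e2 : y' = w := ((hz.2.2 y' hy2.2.symm).resolve_left hy'.1)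
      rw [e1, e2]
    have h2 : (Zset G z w).Subsingleton := by
      intro y hy y' hy'
      have hy1 := zset_adj hiso hsz hwprop.2 hy
      have hy2 := zset_adj hiso hsz hwprop.2 hy'
      have e1 : y = a := ((hz.2.2 y hy1.1.symm).resolve_right hy.2.1)
      have e2 : y' = a := ((hz.2.2 y' hy2.1.symm).resolve_right hy'.2.1)
      rw [e1, e2]
    exact necCore hiso hadj.1.symm hadj.2 hwa.ne' haprop.2 hsz hwprop.2 h1 h2 hx
  by_cases hzwc : (Zset G w c).Nonempty
  · obtain ⟨z, hz⟩ := hzwc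
    have hadj := zset_adj hiso hwprop.2 hcprop.2 hz
    have hsz : ¬ IsSupp G z := by
      rintro ⟨p, hzp, hp1⟩
      rcases hz.2.2 p hzp with rfl | rfl
      exacts [hwprop.1 hp1, hcprop.1 hp1]
    have h1 : (Zset G w z).Subsingleton := by
      intro y hy y' hy'
      have hy1 := zset_adj hiso hwprop.2 hsz hy
      have hy2 := zset_adj hiso hwprop.2 hsz hy'
      have e1 : y = c := ((hz.2.2 y hy1.2.symm).resolve_left hy.1)
      have e2 : y' = c := ((hz.2.2 y' hy2.2.symm).resolve_left hy'.1)
      rw [e1, e2]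
    have h2 : (Zset G z c).Subsingleton := by
      intro y hy y' hy'
      have hy1 := zset_adj hiso hsz hcprop.2 hy
      have hy2 := zset_adj hiso hsz hcprop.2 hy'
      have e1 : y = w := ((hz.2.2 y hy1.1.symm).resolve_right hy.2.1)
      have e2 : y' = w := ((hz.2.2 y' hy2.1.symm).resolve_right hy'.2.1)
      rw [e1, e2]
    exact necCore hiso hadj.1.symm hadj.2 hwc.ne hwprop.2 hsz hcprop.2 h1 h2 hx
  · rw [Set.not_nonempty_iff_eq_empty] at hzaw hzwc
    exact necCore hiso hwa.symm hwc hac haprop.2 hwprop.2 hcprop.2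
      (hzaw ▸ Set.subsingleton_empty) (hzwc ▸ Set.subsingleton_empty) hx

end NecMain

section Sufficiency

set_option linter.unusedSectionVars false

variable (G : SimpleGraph V) [DecidableRel G.Adj]

/-- a canonical incident edge at each non-isolated vertex -/
noncomputable def chEdge (hiso : ∀ v : V, G.degree v ≠ 0) (v : V) : Sym2 V :=
  s(v, (exists_adj hiso v).choose)

/-- tie-breaking order on vertices -/
def le' (v u : V) : Prop := (Fintype.equivFin V) v ≤ (Fintype.equivFin V) u

def selP (S : Finset (Sym2 V)) (v : V) : Prop :=
  G.degree v = 1 ∧ incEdges G v ⊆ ↑S ∧ ∀ u, G.Adj v u → G.degree u = 1 → le' v u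

def R0v (v : V) : Prop :=
  G.degree v ≠ 1 ∧ ¬ IsSupp G v ∧ ∀ e, TypeI G e → v ∉ e

def selR0 (S : Finset (Sym2 V)) (v : V) : Prop :=
  R0v G v ∧ incEdges G v ⊆ ↑S

def selT (S : Finset (Sym2 V)) (v : V) : Prop :=
  G.degree v ≠ 1 ∧ ¬ IsSupp G v ∧ incEdges G v ⊆ ↑S ∧
    ∃ u, G.Adj v u ∧ TypeI G s(v, u) ∧ (¬ (incEdges G u ⊆ ↑S) ∨ le' v u)

open Classical in
noncomputable def sel1 (S : Finset (Sym2 V)) : Finset V :=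
  Finset.univ.filter (selP G S)

open Classical in
noncomputable def sel2 (S : Finset (Sym2 V)) : Finset V :=
  Finset.univ.filter (selR0 G S)

open Classical in
noncomputable def sel3 (S : Finset (Sym2 V)) : Finset V :=
  Finset.univ.filter (selT G S)

open Classical in
noncomputable def n1 (S : Finset (Sym2 V)) : ℕ :=
  (S.filter (fun e => PendantEdge G e)).card

noncomputable def n2 (S : Finset (Sym2 V)) : ℕ := (sel2 G S).card

open Classical in
noncomputable def n3 (S : Finset (Sym2 V)) : ℕ :=
  (S.filter (fun e => TypeI G e ∧ ∃ z ∈ e, incEdges G z ⊆ ↑S)).card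

variable {G}

lemma chEdge_mem (hiso : ∀ v : V, G.degree v ≠ 0) (v : V) :
    chEdge G hiso v ∈ incEdges G v :=
  adj_mem_incEdges (exists_adj hiso v).choose_spec

lemma mem_chEdge (hiso : ∀ v : V, G.degree v ≠ 0) (v : V) : v ∈ chEdge G hiso v :=
  Sym2.mem_mk_left _ _

lemma chEdge_eq_of_pendant (hiso : ∀ v : V, G.degree v ≠ 0) {v : V}
    (hv : G.degree v = 1) {e : Sym2 V} (he : e ∈ incEdges G v) :
    chEdge G hiso v = e :=
  pendant_edge_unique hv (chEdge_mem hiso v) he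

lemma le'_antisymm {u v : V} (h1 : le' u v) (h2 : le' v u) : u = v :=
  (Fintype.equivFin V).injective (le_antisymm h1 h2)

lemma le'_total (u v : V) : le' u v ∨ le' v u := le_total _ _

lemma card_sel1 (hiso : ∀ v : V, G.degree v ≠ 0) {S : Finset (Sym2 V)}
    (hS : S ⊆ G.edgeFinset) : (sel1 G S).card = n1 G S := by
  classical
  apply Finset.card_bij (fun v _ => chEdge G hiso v)
  · intro v hv
    have hsel : selP G S v := (Finset.mem_filter.mp hv).2
    rw [Finset.mem_filter]
    constructor
    · exact Finset.mem_coe.mp (hsel.2.1 (chEdge_mem hiso v))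
    · exact ⟨(chEdge_mem hiso v).1, v, mem_chEdge hiso v, hsel.1⟩
  · intro v hv v' hv' heq
    have hsel : selP G S v := (Finset.mem_filter.mp hv).2
    have hsel' : selP G S v' := (Finset.mem_filter.mp hv').2
    have hvmem : v ∈ chEdge G hiso v' := heq ▸ mem_chEdge hiso v
    rcases Sym2.mem_iff.mp hvmem with h | h
    · exact h
    · -- v is the chosen neighbour of v'
      have hadj : G.Adj v' v := h ▸ (exists_adj hiso v').choose_spec
      have h1 : le' v v' := hsel.2.2 v' hadj.symm hsel'.1
      have h2 : le' v' v := hsel'.2.2 v hadj hsel.1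
      exact le'_antisymm h1 h2
  · intro e he
    rw [Finset.mem_filter] at he
    obtain ⟨heS, heE, p, hpe, hp1⟩ := he
    obtain ⟨u, hpu, rfl⟩ := edge_decomp heE hpe
    have hememp : s(p, u) ∈ incEdges G p := ⟨heE, Sym2.mem_mk_left p u⟩
    have hememu : s(p, u) ∈ incEdges G u := ⟨heE, Sym2.mem_mk_right p u⟩
    by_cases hcase : G.degree u = 1 ∧ le' u p
    · refine ⟨u, ?_, ?_⟩
      · refine Finset.mem_filter.mpr ⟨Finset.mem_univ u, hcase.1, ?_, ?_⟩
        · intro f hf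
          rw [pendant_edge_unique hcase.1 hf hememu] at *
          exact Finset.mem_coe.mpr heS
        · intro w hw hw1
          have : w = p := nbr_eq_of_degree_one hcase.1 hw hpu.symm
          exact this ▸ hcase.2
      · exact chEdge_eq_of_pendant hiso hcase.1 hememu
    · refine ⟨p, ?_, ?_⟩
      · refine Finset.mem_filter.mpr ⟨Finset.mem_univ p, hp1, ?_, ?_⟩
        · intro f hf
          rw [pendant_edge_unique hp1 hf hememp] at *
          exact Finset.mem_coe.mpr heS
        · intro w hw hw1
          have hwu : w = u := nbr_eq_of_degree_one hp1 hw hpu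
          subst hwu
          rcases le'_total p w with h | h
          · exact h
          · exact absurd ⟨hw1, h⟩ hcase
      · exact chEdge_eq_of_pendant hiso hp1 hememp

lemma card_sel3
    (hii : ∀ e f : Sym2 V, TypeI G e → TypeI G f → e ≠ f → ¬ ∃ w : V, w ∈ e ∧ w ∈ f)
    {S : Finset (Sym2 V)} (hS : S ⊆ G.edgeFinset) :
    (sel3 G S).card = n3 G S := by
  classical
  apply Finset.card_bij
    (fun v hv => s(v, ((Finset.mem_filter.mp hv).2.2.2.2).choose))
  · intro v hv
    obtain ⟨hadj, hti, -⟩ := ((Finset.mem_filter.mp hv).2.2.2.2).choose_spec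
    have hinS : incEdges G v ⊆ ↑S := (Finset.mem_filter.mp hv).2.2.2.1
    rw [Finset.mem_filter]
    exact ⟨Finset.mem_coe.mp (hinS (adj_mem_incEdges hadj)), hti,
      v, Sym2.mem_mk_left _ _, hinS⟩
  · intro v hv v' hv' heq
    obtain ⟨hadj, hti, hcond⟩ := ((Finset.mem_filter.mp hv).2.2.2.2).choose_spec
    obtain ⟨hadj', hti', hcond'⟩ := ((Finset.mem_filter.mp hv').2.2.2.2).choose_spec
    by_contra hne
    have hv'mem : v' ∈ s(v, ((Finset.mem_filter.mp hv).2.2.2.2).choose) := by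
      rw [heq]; exact Sym2.mem_mk_left _ _
    have hvmem : v ∈ s(v', ((Finset.mem_filter.mp hv').2.2.2.2).choose) := by
      rw [← heq]; exact Sym2.mem_mk_left _ _
    have hev' : ((Finset.mem_filter.mp hv).2.2.2.2).choose = v' := by
      rcases Sym2.mem_iff.mp hv'mem with h | h
      · exact absurd h.symm hne
      · exact h.symm
    have hev : ((Finset.mem_filter.mp hv').2.2.2.2).choose = v := by
      rcases Sym2.mem_iff.mp hvmem with h | h
      · exact absurd h hne
      · exact h.symm
    rw [hev'] at hcond
    rw [hev] at hcond'
    have hle1 : le' v v' :=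
      hcond.resolve_left (not_not_intro ((Finset.mem_filter.mp hv').2.2.2.1))
    have hle2 : le' v' v :=
      hcond'.resolve_left (not_not_intro ((Finset.mem_filter.mp hv).2.2.2.1))
    exact hne (le'_antisymm hle1 hle2)
  · intro e he
    rw [Finset.mem_filter] at he
    obtain ⟨heS, hte, z, hzmem, hzS⟩ := he
    obtain ⟨u, hzu, rfl⟩ := edge_decomp hte.1 hzmem
    have hzp := typeI_endpoint hte (Sym2.mem_mk_left z u)
    have hup := typeI_endpoint hte (Sym2.mem_mk_right z u)
    have key : ∀ v, selT G S v → v ∈ s(z, u) →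
        ∃ (hv : v ∈ sel3 G S), s(v, ((Finset.mem_filter.mp hv).2.2.2.2).choose) = s(z, u) := by
      intro v hsel hvm
      have hv : v ∈ sel3 G S := Finset.mem_filter.mpr ⟨Finset.mem_univ v, hsel⟩
      refine ⟨hv, ?_⟩
      obtain ⟨hadj, hti, -⟩ := ((Finset.mem_filter.mp hv).2.2.2.2).choose_spec
      exact typeI_unique hii hti hte (Sym2.mem_mk_left _ _) hvm
    by_cases hcase : incEdges G u ⊆ ↑S ∧ le' u z
    · obtain ⟨hv, hveq⟩ := key u ⟨hup.1, hup.2, hcase.1,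
        z, hzu.symm, by rwa [Sym2.eq_swap], Or.inr hcase.2⟩ (Sym2.mem_mk_right z u)
      exact ⟨u, hv, hveq⟩
    · have hsel : selT G S z := by
        refine ⟨hzp.1, hzp.2, hzS, u, hzu, hte, ?_⟩
        by_cases hus : incEdges G u ⊆ ↑S
        · rcases le'_total z u with h | h
          · exact Or.inr h
          · exact absurd ⟨hus, h⟩ hcase
        · exact Or.inl hus
      obtain ⟨hv, hveq⟩ := key z hsel (Sym2.mem_mk_left z u)
      exact ⟨z, hv, hveq⟩

end Sufficiency

section Formula

set_option linter.unusedSectionVars false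

variable {G : SimpleGraph V} [DecidableRel G.Adj]

lemma lower_bound (hiso : ∀ v : V, G.degree v ≠ 0)
    (hii : ∀ e f : Sym2 V, TypeI G e → TypeI G f → e ≠ f → ¬ ∃ w : V, w ∈ e ∧ w ∈ f)
    {S : Finset (Sym2 V)} (hS : S ⊆ G.edgeFinset) :
    n1 G S + n2 G S + n3 G S ≤ gammaIS G S := by
  classical
  set I : Finset V := (sel1 G S ∪ sel2 G S) ∪ sel3 G S with hI
  have hmem : ∀ v ∈ I, selP G S v ∨ selR0 G S v ∨ selT G S v := by
    intro v hv
    rcases Finset.mem_union.mp hv with h | h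
    · rcases Finset.mem_union.mp h with h' | h'
      · exact Or.inl (Finset.mem_filter.mp h').2
      · exact Or.inr (Or.inl (Finset.mem_filter.mp h').2)
    · exact Or.inr (Or.inr (Finset.mem_filter.mp h).2)
  have hsub : ↑I ⊆ onlyInc G ↑S := by
    intro v hv
    rcases hmem v (Finset.mem_coe.mp hv) with h | h | h
    · exact h.2.1
    · exact h.2
    · exact h.2.2.1
  have hind : Indep G I := by
    intro u hu v hv hadj
    rcases hmem u hu with hPu | hRu | hTu <;> rcases hmem v hv with hPv | hRv | hTv
    · exact hadj.ne (le'_antisymm (hPu.2.2 v hadj hPv.1) (hPv.2.2 u hadj.symm hPu.1))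
    · exact hRv.1.2.1 ⟨u, hadj.symm, hPu.1⟩
    · exact hTv.2.1 ⟨u, hadj.symm, hPu.1⟩
    · exact hRu.1.2.1 ⟨v, hadj, hPv.1⟩
    · exact hRu.1.2.2 _ ((typeI_iff hadj).mpr ⟨hRu.1.1, hRv.1.1, hRu.1.2.1, hRv.1.2.1⟩)
        (Sym2.mem_mk_left u v)
    · exact hRu.1.2.2 _ ((typeI_iff hadj).mpr ⟨hRu.1.1, hTv.1, hRu.1.2.1, hTv.2.1⟩)
        (Sym2.mem_mk_left u v)
    · exact hTu.2.1 ⟨v, hadj, hPv.1⟩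
    · exact hRv.1.2.2 _ ((typeI_iff hadj).mpr ⟨hTu.1, hRv.1.1, hTu.2.1, hRv.1.2.1⟩)
        (Sym2.mem_mk_right u v)
    · obtain ⟨w, huw, htw, hcondu⟩ := hTu.2.2.2
      obtain ⟨w', hvw', htw', hcondv⟩ := hTv.2.2.2
      have htuv : TypeI G s(u, v) :=
        (typeI_iff hadj).mpr ⟨hTu.1, hTv.1, hTu.2.1, hTv.2.1⟩
      have hw : w = v := by
        have h1 : s(u, w) = s(u, v) :=
          typeI_unique hii htw htuv (Sym2.mem_mk_left _ _) (Sym2.mem_mk_left _ _)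
        exact Sym2.congr_right.mp h1
      have hw' : w' = u := by
        have h2 : s(v, w') = s(u, v) :=
          typeI_unique hii htw' htuv (Sym2.mem_mk_left _ _) (Sym2.mem_mk_right _ _)
        have hmem : w' ∈ s(u, v) := h2 ▸ Sym2.mem_mk_right v w'
        rcases Sym2.mem_iff.mp hmem with h | h
        · exact h
        · exact absurd h hvw'.ne'
      rw [hw] at hcondu
      rw [hw'] at hcondv
      have h1 : le' u v := hcondu.resolve_left (not_not_intro hTv.2.2.1)
      have h2 : le' v u := hcondv.resolve_left (not_not_intro hTu.2.2.1)
      exact hadj.ne (le'_antisymm h1 h2)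
  have hcard : I.card = n1 G S + n2 G S + n3 G S := by
    have d12 : Disjoint (sel1 G S) (sel2 G S) := by
      rw [Finset.disjoint_left]
      intro v h1 h2
      exact (Finset.mem_filter.mp h2).2.1.1 (Finset.mem_filter.mp h1).2.1
    have d13 : Disjoint (sel1 G S) (sel3 G S) := by
      rw [Finset.disjoint_left]
      intro v h1 h2
      exact (Finset.mem_filter.mp h2).2.1 (Finset.mem_filter.mp h1).2.1
    have d23 : Disjoint (sel2 G S) (sel3 G S) := by
      rw [Finset.disjoint_left]
      intro v h1 h2
      obtain ⟨w, hw, htw, -⟩ := (Finset.mem_filter.mp h2).2.2.2.2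
      exact (Finset.mem_filter.mp h1).2.1.2.2 _ htw (Sym2.mem_mk_left _ _)
    rw [hI, Finset.card_union_of_disjoint, Finset.card_union_of_disjoint d12,
      card_sel1 hiso hS, card_sel3 hii hS]
    · rfl
    · rw [Finset.disjoint_union_left]
      exact ⟨d13, d23⟩
  calc n1 G S + n2 G S + n3 G S = I.card := hcard.symm
    _ ≤ gammaIS G S := le_alphaOn hsub hind

lemma upper_bound (hiso : ∀ v : V, G.degree v ≠ 0)
    {S : Finset (Sym2 V)} (hS : S ⊆ G.edgeFinset) :
    gammaIS G S ≤ n1 G S + n2 G S + n3 G S := by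
  classical
  refine alphaOn_le fun J hJ hind => ?_
  have hinS : ∀ v ∈ J, incEdges G v ⊆ ↑S := fun v hv => hJ (Finset.mem_coe.mpr hv)
  set p1 : V → Prop := fun v => G.degree v = 1 ∨ IsSupp G v with hp1
  set p2 : V → Prop := fun v => ∃ e, TypeI G e ∧ v ∈ e with hp2
  have hsplit1 : (J.filter p1).card + (J.filter (fun v => ¬ p1 v)).card = J.card :=
    Finset.card_filter_add_card_filter_not p1
  have hsplit2 : ((J.filter (fun v => ¬ p1 v)).filter p2).card +
      ((J.filter (fun v => ¬ p1 v)).filter (fun v => ¬ p2 v)).card =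
      (J.filter (fun v => ¬ p1 v)).card :=
    Finset.card_filter_add_card_filter_not p2
  -- bound 1 : pendant or support vertices inject into pendant edges of S
  have hb1 : (J.filter p1).card ≤ n1 G S := by
    set f : V → Sym2 V := fun v =>
      if h : G.degree v = 1 then chEdge G hiso v
      else if h2 : IsSupp G v then s(v, h2.choose) else chEdge G hiso v with hf
    have hfmem : ∀ v, f v ∈ incEdges G v := by
      intro v
      rw [hf]
      dsimp only
      split_ifs with h h2
      · exact chEdge_mem hiso v
      · exact adj_mem_incEdges h2.choose_spec.1
      · exact chEdge_mem hiso v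
    apply Finset.card_le_card_of_injOn f
    · intro v hv
      obtain ⟨hvJ, hvp⟩ := Finset.mem_filter.mp hv
      refine Finset.mem_filter.mpr ⟨Finset.mem_coe.mp (hinS v hvJ (hfmem v)), ?_⟩
      rw [hf]
      dsimp only
      split_ifs with h h2
      · exact ⟨(chEdge_mem hiso v).1, v, (mem_incEdges.mp (chEdge_mem hiso v)).2, h⟩
      · exact ⟨G.mem_edgeSet.mpr h2.choose_spec.1, h2.choose,
          Sym2.mem_mk_right _ _, h2.choose_spec.2⟩
      · exact absurd (show G.degree v = 1 ∨ IsSupp G v from hvp) (by simp [h, h2])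
    · intro u hu v hv heq
      by_contra hne
      have humem : u ∈ f v := heq ▸ (mem_incEdges.mp (hfmem u)).2
      have hvmem : v ∈ f v := (mem_incEdges.mp (hfmem v)).2
      have hedge : f v = s(u, v) := (Sym2.mem_and_mem_iff hne).mp ⟨humem, hvmem⟩
      have hadj : G.Adj u v := G.mem_edgeSet.mp (hedge ▸ (hfmem v).1)
      exact hind u (Finset.mem_filter.mp hu).1 v (Finset.mem_filter.mp hv).1 hadj
  -- bound 2 : R₀ vertices
  have hb2 : ((J.filter (fun v => ¬ p1 v)).filter (fun v => ¬ p2 v)).card ≤ n2 G S := by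
    apply Finset.card_le_card
    intro v hv
    obtain ⟨hv1, hv2⟩ := Finset.mem_filter.mp hv
    obtain ⟨hvJ, hvp1⟩ := Finset.mem_filter.mp hv1
    have hvp1' : ¬ (G.degree v = 1 ∨ IsSupp G v) := hvp1
    have hv2' : ¬ ∃ e, TypeI G e ∧ v ∈ e := hv2
    push_neg at hvp1'
    exact Finset.mem_filter.mpr ⟨Finset.mem_univ v,
      ⟨hvp1'.1, hvp1'.2, fun e ht hm => hv2' ⟨e, ht, hm⟩⟩, hinS v hvJ⟩
  -- bound 3 : type I endpoints inject into active type I edges of S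
  have hb3 : ((J.filter (fun v => ¬ p1 v)).filter p2).card ≤ n3 G S := by
    set g : V → Sym2 V := fun v =>
      if h : ∃ e, TypeI G e ∧ v ∈ e then h.choose else chEdge G hiso v with hg
    have hgmem : ∀ v, g v ∈ incEdges G v := by
      intro v
      rw [hg]
      dsimp only
      split_ifs with h
      · exact ⟨h.choose_spec.1.1, h.choose_spec.2⟩
      · exact chEdge_mem hiso v
    apply Finset.card_le_card_of_injOn g
    · intro v hv
      obtain ⟨hv1, hv2⟩ := Finset.mem_filter.mp hv
      have hv2' : ∃ e, TypeI G e ∧ v ∈ e := hv2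
      have hvJ : v ∈ J := (Finset.mem_filter.mp hv1).1
      refine Finset.mem_filter.mpr ⟨Finset.mem_coe.mp (hinS v hvJ (hgmem v)), ?_⟩
      rw [hg]
      dsimp only
      rw [dif_pos hv2']
      exact ⟨hv2'.choose_spec.1, v, hv2'.choose_spec.2, hinS v hvJ⟩
    · intro u hu v hv heq
      by_contra hne
      have humem : u ∈ g v := heq ▸ (mem_incEdges.mp (hgmem u)).2
      have hvmem : v ∈ g v := (mem_incEdges.mp (hgmem v)).2
      have hedge : g v = s(u, v) := (Sym2.mem_and_mem_iff hne).mp ⟨humem, hvmem⟩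
      have hadj : G.Adj u v := G.mem_edgeSet.mp (hedge ▸ (hgmem v).1)
      exact hind u (Finset.mem_filter.mp (Finset.mem_filter.mp hu).1).1 v
        (Finset.mem_filter.mp (Finset.mem_filter.mp hv).1).1 hadj
  omega

theorem gamma_eq (hiso : ∀ v : V, G.degree v ≠ 0)
    (hii : ∀ e f : Sym2 V, TypeI G e → TypeI G f → e ≠ f → ¬ ∃ w : V, w ∈ e ∧ w ∈ f)
    {S : Finset (Sym2 V)} (hS : S ⊆ G.edgeFinset) :
    gammaIS G S = n1 G S + n2 G S + n3 G S :=
  le_antisymm (upper_bound hiso hS) (lower_bound hiso hii hS)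

end Formula

section Alloc

set_option linter.unusedSectionVars false

variable (G : SimpleGraph V) [DecidableRel G.Adj]

open Classical in
/-- the PMAS allocation -/
noncomputable def xAlloc (hiso : ∀ v : V, G.degree v ≠ 0)
    (S : Finset (Sym2 V)) (g : Sym2 V) : ℝ :=
  (if PendantEdge G g ∧ g ∈ S then 1 else 0)
  + (if TypeI G g ∧ ∃ z ∈ g, incEdges G z ⊆ ↑S then 1 else 0)
  + ((Finset.univ.filter (fun v => selR0 G S v ∧ chEdge G hiso v = g)).card : ℝ)

variable {G}

lemma xAlloc_nonneg (hiso : ∀ v : V, G.degree v ≠ 0) (S : Finset (Sym2 V)) (g : Sym2 V) :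
    0 ≤ xAlloc G hiso S g := by
  classical
  simp only [xAlloc]
  have h1 : (0:ℝ) ≤ if PendantEdge G g ∧ g ∈ S then (1:ℝ) else 0 := by positivity
  have h2 : (0:ℝ) ≤ if TypeI G g ∧ ∃ z ∈ g, incEdges G z ⊆ ↑S then (1:ℝ) else 0 := by positivity
  have h3 : (0:ℝ) ≤ ((Finset.univ.filter
      (fun v => selR0 G S v ∧ chEdge G hiso v = g)).card : ℝ) := Nat.cast_nonneg _
  linarith

lemma xAlloc_mono (hiso : ∀ v : V, G.degree v ≠ 0) {S T : Finset (Sym2 V)}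
    (hST : S ⊆ T) (g : Sym2 V) : xAlloc G hiso S g ≤ xAlloc G hiso T g := by
  classical
  have hcoe : (↑S : Set (Sym2 V)) ⊆ ↑T := Finset.coe_subset.mpr hST
  simp only [xAlloc]
  have h1 : (if PendantEdge G g ∧ g ∈ S then (1:ℝ) else 0) ≤
      (if PendantEdge G g ∧ g ∈ T then (1:ℝ) else 0) := by
    split_ifs with h h'
    · exact le_refl _
    · exact absurd ⟨h.1, hST h.2⟩ h'
    · norm_num
    · exact le_refl _
  have h2 : (if TypeI G g ∧ ∃ z ∈ g, incEdges G z ⊆ ↑S then (1:ℝ) else 0) ≤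
      (if TypeI G g ∧ ∃ z ∈ g, incEdges G z ⊆ ↑T then (1:ℝ) else 0) := by
    split_ifs with h h'
    · exact le_refl _
    · obtain ⟨ht, z, hz, hzS⟩ := h
      exact absurd ⟨ht, z, hz, fun e he => hcoe (hzS he)⟩ h'
    · norm_num
    · exact le_refl _
  have h3 : ((Finset.univ.filter
        (fun v => selR0 G S v ∧ chEdge G hiso v = g)).card : ℝ) ≤
      ((Finset.univ.filter
        (fun v => selR0 G T v ∧ chEdge G hiso v = g)).card : ℝ) := by
    have : (Finset.univ.filter (fun v => selR0 G S v ∧ chEdge G hiso v = g)) ⊆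
        (Finset.univ.filter (fun v => selR0 G T v ∧ chEdge G hiso v = g)) := by
      intro v hv
      obtain ⟨hv1, ⟨hR, hvS⟩, hch⟩ := Finset.mem_filter.mp hv
      exact Finset.mem_filter.mpr ⟨hv1, ⟨hR, fun e he => hcoe (hvS he)⟩, hch⟩
    exact_mod_cast Nat.cast_le.mpr (Finset.card_le_card this)
  linarith

lemma xAlloc_eff (hiso : ∀ v : V, G.degree v ≠ 0) {S : Finset (Sym2 V)}
    (hS : S ⊆ G.edgeFinset) :
    ∑ g ∈ S, xAlloc G hiso S g = ((n1 G S + n2 G S + n3 G S : ℕ) : ℝ) := by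
  classical
  simp only [xAlloc]
  rw [Finset.sum_add_distrib, Finset.sum_add_distrib]
  have e1 : ∑ g ∈ S, (if PendantEdge G g ∧ g ∈ S then (1:ℝ) else 0) = (n1 G S : ℝ) := by
    rw [Finset.sum_boole]
    norm_num [n1]
    congr 1
    apply Finset.filter_congr
    intro g hg
    simp [hg]
  have e2 : ∑ g ∈ S, (if TypeI G g ∧ ∃ z ∈ g, incEdges G z ⊆ ↑S then (1:ℝ) else 0)
      = (n3 G S : ℝ) := by
    rw [Finset.sum_boole]
    norm_num [n3]
  have e3 : ∑ g ∈ S, ((Finset.univ.filter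
      (fun v => selR0 G S v ∧ chEdge G hiso v = g)).card : ℝ) = (n2 G S : ℝ) := by
    rw [← Nat.cast_sum]
    congr 1
    have hmap : ∀ v ∈ Finset.univ.filter (fun v => selR0 G S v), chEdge G hiso v ∈ S := by
      intro v hv
      exact Finset.mem_coe.mp ((Finset.mem_filter.mp hv).2.2 (chEdge_mem hiso v))
    have := Finset.card_eq_sum_card_fiberwise hmap
    rw [n2, sel2, this]
    apply Finset.sum_congr rfl
    intro g hg
    congr 1
    rw [Finset.filter_filter]
  rw [e1, e2, e3]
  push_cast
  ring

theorem pmas_exists (hiso : ∀ v : V, G.degree v ≠ 0)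
    (hii : ∀ e f : Sym2 V, TypeI G e → TypeI G f → e ≠ f → ¬ ∃ w : V, w ∈ e ∧ w ∈ f) :
    ∃ x : Finset (Sym2 V) → Sym2 V → ℝ, IsPMAS G x := by
  refine ⟨fun S g => xAlloc G hiso S g, ?_, ?_, ?_⟩
  · exact fun S _ i _ => xAlloc_nonneg hiso S i
  · intro S hS _
    rw [xAlloc_eff hiso hS, gamma_eq hiso hii hS]
  · exact fun S T hST _ _ i _ => xAlloc_mono hiso hST i

end Alloc

/-- Theorem 1 of the paper.  The independent set game on a graph
`G` with no isolated vertices is population monotonic if and only if (i) every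
vertex has distance at most two to a pendant vertex, and (ii) no two distinct
non-pendant edges of type I are incident. -/
theorem stmt_9 (G : SimpleGraph V) [DecidableRel G.Adj]
    (hiso : ∀ v : V, G.degree v ≠ 0) :
    (∃ x : Finset (Sym2 V) → Sym2 V → ℝ, IsPMAS G x) ↔
      ((∀ v : V, NearPendant G v) ∧
        (∀ e f : Sym2 V, TypeI G e → TypeI G f → e ≠ f →
          ¬ ∃ w : V, w ∈ e ∧ w ∈ f)) := by
  constructor
  · intro hx
    have hii := hii_of_pmas hiso hx
    exact ⟨fun v => near_of_hii hiso hii v, hii⟩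
  · rintro ⟨-, hii⟩
    exact pmas_exists hiso hii
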